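/- Let s be a positive integer. If H is a K_{s,s}-free bipartite graph with parts X and Y, each of size m, then e(H) ≤ (s-1)^{1/s} m^{2-1/s} + (s-1)m. -/

import Mathlib

open Finset



lemma kst_deg_sum {V : Type*} [Fintype V] [DecidableEq V]
    (H : SimpleGraph V) [DecidableRel H.Adj]
    (X Y : Finset V) (hdisj : Disjoint X Y)
    (hbip : ∀ u v, H.Adj u v → (u ∈ X ∧ v ∈ Y) ∨ (u ∈ Y ∧ v ∈ X)) :
    ∑ y ∈ Y, H.degree y = H.edgeFinset.card := by
  have hN : ∀ y ∈ Y, ∀ v, H.Adj y v → v ∈ X := by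
    intro y hy v hv
    rcases hbip y v hv with ⟨h1, _⟩ | ⟨_, h2⟩
    · exact absurd hy (Finset.disjoint_left.1 hdisj h1)
    · exact h2
  have hP : ((Y ×ˢ (univ : Finset V)).filter fun p => H.Adj p.1 p.2).card
      = ∑ y ∈ Y, H.degree y := by
    rw [Finset.card_filter, Finset.sum_product]
    refine Finset.sum_congr rfl fun y hy => ?_
    rw [← SimpleGraph.card_neighborFinset_eq_degree, SimpleGraph.neighborFinset_eq_filter,
      Finset.card_filter]
  rw [← hP]
  refine Finset.card_bij (fun p _ => s(p.1, p.2)) ?_ ?_ ?_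
  · rintro ⟨a, b⟩ hp
    rw [Finset.mem_filter] at hp
    simpa [SimpleGraph.mem_edgeFinset] using hp.2
  · rintro ⟨a, b⟩ ha ⟨c, d⟩ hc h
    rw [Finset.mem_filter, Finset.mem_product] at ha hc
    rw [Sym2.mk_eq_mk_iff] at h
    rcases h with h | h
    · exact h
    · -- a = d, b = c : contradiction since a ∈ Y and d ∈ X
      simp only [Prod.swap_prod_mk, Prod.mk.injEq] at h
      have hdX : d ∈ X := hN c hc.1.1 d hc.2
      exact absurd ha.1.1 (Finset.disjoint_left.1 hdisj (h.1 ▸ hdX))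
  · intro q hq
    rw [SimpleGraph.mem_edgeFinset] at hq
    induction q with
    | _ a b =>
      rcases hbip a b ((SimpleGraph.mem_edgeSet _).1 hq) with ⟨haX, hbY⟩ | ⟨haY, hbX⟩
      · refine ⟨(b, a), ?_, Sym2.eq_swap⟩
        rw [Finset.mem_filter, Finset.mem_product]
        exact ⟨⟨hbY, Finset.mem_univ a⟩, ((SimpleGraph.mem_edgeSet _).1 hq).symm⟩
      · refine ⟨(a, b), ?_, rfl⟩
        rw [Finset.mem_filter, Finset.mem_product]
        exact ⟨⟨haY, Finset.mem_univ b⟩, (SimpleGraph.mem_edgeSet _).1 hq⟩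


lemma kst_count {V : Type*} [Fintype V] [DecidableEq V]
    (H : SimpleGraph V) [DecidableRel H.Adj]
    (X Y : Finset V) (hdisj : Disjoint X Y)
    (hbip : ∀ u v, H.Adj u v → (u ∈ X ∧ v ∈ Y) ∨ (u ∈ Y ∧ v ∈ X))
    (m s : ℕ) (hs : 1 ≤ s) (hX : X.card = m)
    (hfree : ¬ ∃ (A B : Finset V), A ⊆ X ∧ B ⊆ Y ∧ A.card = s ∧ B.card = s ∧
      ∀ a ∈ A, ∀ b ∈ B, H.Adj a b) :
    ∑ y ∈ Y, (H.degree y).choose s ≤ (s - 1) * m.choose s := by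
  have hN : ∀ y ∈ Y, H.neighborFinset y ⊆ X := by
    intro y hy v hv
    rw [SimpleGraph.mem_neighborFinset] at hv
    rcases hbip y v hv with ⟨h1, _⟩ | ⟨_, h2⟩
    · exact absurd hy (Finset.disjoint_left.1 hdisj h1)
    · exact h2
  have step1 : ∀ y ∈ Y, (H.degree y).choose s =
      ((X.powersetCard s).filter fun S => S ⊆ H.neighborFinset y).card := by
    intro y hy
    have : (X.powersetCard s).filter (fun S => S ⊆ H.neighborFinset y)
        = (H.neighborFinset y).powersetCard s := by
      ext S
      simp only [Finset.mem_filter, Finset.mem_powersetCard]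
      exact ⟨fun ⟨⟨_, hc⟩, hsub⟩ => ⟨hsub, hc⟩,
        fun ⟨hsub, hc⟩ => ⟨⟨hsub.trans (hN y hy), hc⟩, hsub⟩⟩
    rw [this, Finset.card_powersetCard, SimpleGraph.card_neighborFinset_eq_degree]
  have step2 : ∑ y ∈ Y, (H.degree y).choose s =
      ∑ S ∈ X.powersetCard s, (Y.filter fun y => S ⊆ H.neighborFinset y).card := by
    rw [Finset.sum_congr rfl step1]
    simp only [Finset.card_filter]
    exact Finset.sum_comm
  have step3 : ∀ S ∈ X.powersetCard s,
      (Y.filter fun y => S ⊆ H.neighborFinset y).card ≤ s - 1 := by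
    intro S hS
    rw [Finset.mem_powersetCard] at hS
    by_contra hlt
    push_neg at hlt
    have hsle : s ≤ (Y.filter fun y => S ⊆ H.neighborFinset y).card := by omega
    obtain ⟨B, hBsub, hBcard⟩ := Finset.exists_subset_card_eq hsle
    refine hfree ⟨S, B, hS.1, hBsub.trans (Finset.filter_subset _ _), hS.2, hBcard, ?_⟩
    intro a ha b hb
    have := (Finset.mem_filter.1 (hBsub hb)).2 ha
    exact ((SimpleGraph.mem_neighborFinset _ _ _).1 this).symm
  calc ∑ y ∈ Y, (H.degree y).choose s
      = ∑ S ∈ X.powersetCard s, (Y.filter fun y => S ⊆ H.neighborFinset y).card := step2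
    _ ≤ ∑ S ∈ X.powersetCard s, (s - 1) := Finset.sum_le_sum step3
    _ = (X.powersetCard s).card * (s - 1) := by rw [Finset.sum_const, smul_eq_mul]
    _ = (s - 1) * m.choose s := by rw [Finset.card_powersetCard, hX, Nat.mul_comm]


lemma kst_nat_key {V : Type*} [DecidableEq V] (Y : Finset V) (d : V → ℕ) (m s : ℕ)
    (hcount : ∑ y ∈ Y, (d y).choose s ≤ (s - 1) * m.choose s) :
    ∑ y ∈ Y, (d y - (s - 1)) ^ s ≤ (s - 1) * m ^ s := by
  have hpt : ∀ n : ℕ, (n - (s - 1)) ^ s ≤ n.descFactorial s := by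
    intro n
    rw [Nat.descFactorial_eq_prod_range]
    calc (n - (s - 1)) ^ s = ∏ _i ∈ Finset.range s, (n - (s - 1)) := by
          rw [Finset.prod_const, Finset.card_range]
      _ ≤ ∏ i ∈ Finset.range s, (n - i) := by
          refine Finset.prod_le_prod' fun i hi => ?_
          have hi' := Finset.mem_range.1 hi
          exact Nat.sub_le_sub_left (by omega : i ≤ s - 1) n
  calc ∑ y ∈ Y, (d y - (s - 1)) ^ s
      ≤ ∑ y ∈ Y, (d y).descFactorial s := Finset.sum_le_sum fun y _ => hpt (d y)
    _ = ∑ y ∈ Y, (Nat.factorial s) * (d y).choose s := by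
        simp only [Nat.descFactorial_eq_factorial_mul_choose]
    _ = (Nat.factorial s) * ∑ y ∈ Y, (d y).choose s := by rw [Finset.mul_sum]
    _ ≤ (Nat.factorial s) * ((s - 1) * m.choose s) := Nat.mul_le_mul_left _ hcount
    _ = (s - 1) * ((Nat.factorial s) * m.choose s) := by ring
    _ = (s - 1) * m.descFactorial s := by rw [Nat.descFactorial_eq_factorial_mul_choose]
    _ ≤ (s - 1) * m ^ s := Nat.mul_le_mul_left _ (m.descFactorial_le_pow s)


/-- the Kővári–Sós–Turán theorem. -/
theorem stmt_2 {V : Type*} [Fintype V] [DecidableEq V]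
    (H : SimpleGraph V) [DecidableRel H.Adj]
    (X Y : Finset V) (hdisj : Disjoint X Y) (hcover : X ∪ Y = Finset.univ)
    (hbip : ∀ u v, H.Adj u v → (u ∈ X ∧ v ∈ Y) ∨ (u ∈ Y ∧ v ∈ X))
    (m s : ℕ) (hs : 1 ≤ s) (hX : X.card = m) (hY : Y.card = m)
    (hfree : ¬ ∃ (A B : Finset V), A ⊆ X ∧ B ⊆ Y ∧ A.card = s ∧ B.card = s ∧
      ∀ a ∈ A, ∀ b ∈ B, H.Adj a b) :
    (H.edgeFinset.card : ℝ) ≤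
      ((s : ℝ) - 1) ^ ((1 : ℝ) / s) * (m : ℝ) ^ ((2 : ℝ) - 1 / s) + ((s : ℝ) - 1) * m := by
  have hsum := kst_deg_sum H X Y hdisj hbip
  have hkey := kst_nat_key Y (fun y => H.degree y) m s
    (kst_count H X Y hdisj hbip m s hs hX hfree)
  have hs1 : (1 : ℝ) ≤ (s : ℝ) := by exact_mod_cast hs
  have hsne : (s : ℝ) ≠ 0 := by positivity
  set e := H.edgeFinset.card with he
  set c : V → ℝ := fun y => ((H.degree y - (s - 1) : ℕ) : ℝ) with hc
  have hcnonneg : ∀ y ∈ Y, 0 ≤ c y := fun y _ => Nat.cast_nonneg _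
  have hA : ∑ y ∈ Y, c y ^ s ≤ ((s : ℝ) - 1) * (m : ℝ) ^ s := by
    have h1 : ((∑ y ∈ Y, (H.degree y - (s - 1)) ^ s : ℕ) : ℝ)
        ≤ (((s - 1) * m ^ s : ℕ) : ℝ) := Nat.cast_le.2 hkey
    rw [Nat.cast_mul, Nat.cast_sub hs, Nat.cast_pow, Nat.cast_sum] at h1
    simpa using h1
  have hB : (e : ℝ) - ((s : ℝ) - 1) * m ≤ ∑ y ∈ Y, c y := by
    have h1 : ∀ y ∈ Y, (H.degree y : ℝ) - ((s : ℝ) - 1) ≤ c y := by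
      intro y _
      have h3 : H.degree y ≤ H.degree y - (s - 1) + (s - 1) := by omega
      have h4 : (H.degree y : ℝ) ≤ ((H.degree y - (s - 1) : ℕ) : ℝ) + ((s - 1 : ℕ) : ℝ) := by
        exact_mod_cast h3
      rw [Nat.cast_sub hs] at h4
      push_cast at h4
      show (H.degree y : ℝ) - ((s : ℝ) - 1) ≤ ((H.degree y - (s - 1) : ℕ) : ℝ)
      linarith
    calc (e : ℝ) - ((s : ℝ) - 1) * m
        = ∑ y ∈ Y, ((H.degree y : ℝ) - ((s : ℝ) - 1)) := by
          rw [Finset.sum_sub_distrib, Finset.sum_const, hY, ← Nat.cast_sum, hsum, nsmul_eq_mul]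
          ring
      _ ≤ ∑ y ∈ Y, c y := Finset.sum_le_sum h1
  by_cases hcase : (e : ℝ) ≤ ((s : ℝ) - 1) * m
  · have h0 : 0 ≤ ((s : ℝ) - 1) ^ ((1 : ℝ) / s) * (m : ℝ) ^ ((2 : ℝ) - 1 / s) :=
      mul_nonneg (Real.rpow_nonneg (by linarith) _) (Real.rpow_nonneg (Nat.cast_nonneg m) _)
    linarith
  · push_neg at hcase
    set t : ℝ := (e : ℝ) - ((s : ℝ) - 1) * m with htdef
    have ht : 0 < t := sub_pos.2 hcase
    have hm : 0 < m := by
      rcases Nat.eq_zero_or_pos m with h | h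
      · exfalso
        have hYe : Y = ∅ := Finset.card_eq_zero.1 (by rw [hY, h])
        rw [hYe, Finset.sum_empty] at hB
        linarith
      · exact h
    have hmR : (0 : ℝ) < m := by exact_mod_cast hm
    have hpm := pow_sum_div_card_le_sum_pow hcnonneg (s - 1)
    have hs' : s - 1 + 1 = s := by omega
    rw [hY, hs'] at hpm
    have h7 : (∑ y ∈ Y, c y) ^ s ≤ (m : ℝ) ^ (s - 1) * ∑ y ∈ Y, c y ^ s := by
      rw [div_le_iff₀ (by positivity)] at hpm
      linarith
    have h5 : t ^ s ≤ ((s : ℝ) - 1) * (m : ℝ) ^ (2 * s - 1) := by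
      have hexp : s - 1 + s = 2 * s - 1 := by omega
      calc t ^ s ≤ (∑ y ∈ Y, c y) ^ s := pow_le_pow_left₀ ht.le hB s
        _ ≤ (m : ℝ) ^ (s - 1) * ∑ y ∈ Y, c y ^ s := h7
        _ ≤ (m : ℝ) ^ (s - 1) * (((s : ℝ) - 1) * (m : ℝ) ^ s) :=
            mul_le_mul_of_nonneg_left hA (by positivity)
        _ = ((s : ℝ) - 1) * ((m : ℝ) ^ (s - 1) * (m : ℝ) ^ s) := by ring
        _ = ((s : ℝ) - 1) * (m : ℝ) ^ (2 * s - 1) := by rw [← pow_add, hexp]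
    have h8 : t ≤ ((s : ℝ) - 1) ^ ((1 : ℝ) / s) * (m : ℝ) ^ ((2 : ℝ) - 1 / s) := by
      have hrw : ((m : ℝ) ^ (2 * s - 1 : ℕ)) ^ ((1 : ℝ) / s)
          = (m : ℝ) ^ ((2 : ℝ) - 1 / s) := by
        rw [← Real.rpow_natCast (m : ℝ) (2 * s - 1), ← Real.rpow_mul hmR.le]
        congr 1
        rw [Nat.cast_sub (by omega : 1 ≤ 2 * s)]
        push_cast
        field_simp
      calc t = (t ^ s) ^ ((1 : ℝ) / s) := by
            rw [← Real.rpow_natCast t s, ← Real.rpow_mul ht.le, mul_one_div, div_self hsne,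
              Real.rpow_one]
        _ ≤ (((s : ℝ) - 1) * (m : ℝ) ^ (2 * s - 1)) ^ ((1 : ℝ) / s) :=
            Real.rpow_le_rpow (by positivity) h5 (by positivity)
        _ = ((s : ℝ) - 1) ^ ((1 : ℝ) / s) * (m : ℝ) ^ ((2 : ℝ) - 1 / s) := by
            rw [Real.mul_rpow (by linarith) (by positivity), hrw]
    linarith
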